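/- Let H be a real Hilbert space, N a positive integer, P : H → ℝ^N a bounded linear operator with adjoint P*, λ > 0, t > 0, f̄ ∈ H, and b ∈ ℝ^N. If f ∈ H is the minimizer of J(f) = (1/N)‖P f − (P f̄ + (1/t) b)‖² + λ‖f‖², then ‖f − f̄‖ ≤ ‖((1/N)P*P + λ·Id)⁻¹ (λ f̄)‖ + (1/(N t)) ‖((1/N)P*P + λ·Id)⁻¹ ∘ P*‖ · ‖b‖, where ‖·‖ on operators denotes the operator norm. -/

import Mathlib

set_option maxHeartbeats 1000000

open ContinuousLinearMap InnerProductSpace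

lemma quad_nonneg_lin_zero (a c : ℝ) (ha : 0 ≤ a) (h : ∀ s : ℝ, 0 ≤ a * s ^ 2 + c * s) :
    c = 0 := by
  have h1 := h (-c / (a + 1))
  have h2 : (0:ℝ) < a + 1 := by linarith
  have h3 : 0 ≤ (a * (-c / (a+1)) ^ 2 + c * (-c / (a+1))) * (a+1)^2 :=
    mul_nonneg h1 (sq_nonneg _)
  have h4 : (a * (-c / (a+1)) ^ 2 + c * (-c / (a+1))) * (a+1)^2 = -(c^2 * (a+1)) + a * c^2 := by
    field_simp
    ring
  rw [h4] at h3
  nlinarith [sq_nonneg c]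

theorem stmt_15 {H : Type*} [NormedAddCommGroup H] [InnerProductSpace ℝ H] [CompleteSpace H]
    (N : ℕ) (hN : 0 < N)
    (P : H →L[ℝ] EuclideanSpace ℝ (Fin N))
    (lam : ℝ) (hlam : 0 < lam) (t : ℝ) (ht : 0 < t)
    (fbar : H) (b : EuclideanSpace ℝ (Fin N))
    (J : H → ℝ)
    (hJ : ∀ f : H, J f = (1 / (N : ℝ)) * ‖P f - (P fbar + (1 / t) • b)‖ ^ 2 + lam * ‖f‖ ^ 2)
    (f : H) (hmin : ∀ g : H, J f ≤ J g) :
    ‖f - fbar‖ ≤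
      ‖Ring.inverse ((1 / (N : ℝ)) • ((ContinuousLinearMap.adjoint P).comp P)
          + lam • (1 : H →L[ℝ] H)) (lam • fbar)‖
      + (1 / ((N : ℝ) * t)) *
        ‖(Ring.inverse ((1 / (N : ℝ)) • ((ContinuousLinearMap.adjoint P).comp P)
            + lam • (1 : H →L[ℝ] H))).comp (ContinuousLinearMap.adjoint P)‖ * ‖b‖ := by
  have hNR : (0:ℝ) < (N:ℝ) := by exact_mod_cast hN
  set A : H →L[ℝ] H :=
    (1 / (N : ℝ)) • ((ContinuousLinearMap.adjoint P).comp P) + lam • (1 : H →L[ℝ] H) with hA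
  set y : EuclideanSpace ℝ (Fin N) := P fbar + (1 / t) • b with hy
  set r : EuclideanSpace ℝ (Fin N) := P f - y with hr
  -- first order condition
  have key : ∀ g : H, (1 / (N:ℝ)) * ⟪r, P g⟫_ℝ + lam * ⟪f, g⟫_ℝ = 0 := by
    intro g
    have hq : ∀ s : ℝ,
        0 ≤ ((1 / (N:ℝ)) * ‖P g‖ ^ 2 + lam * ‖g‖ ^ 2) * s ^ 2
          + (2 * ((1 / (N:ℝ)) * ⟪r, P g⟫_ℝ + lam * ⟪f, g⟫_ℝ)) * s := by
      intro s
      have h0 := hmin (f + s • g)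
      rw [hJ, hJ] at h0
      have e1 : P (f + s • g) - y = r + s • P g := by
        rw [map_add, map_smul, hr]; abel
      rw [e1] at h0
      rw [norm_add_sq_real, norm_add_sq_real] at h0
      rw [real_inner_smul_right, real_inner_smul_right, norm_smul, norm_smul,
        mul_pow, mul_pow, Real.norm_eq_abs, sq_abs] at h0
      nlinarith [h0]
    have hc := quad_nonneg_lin_zero _ _ (by positivity) hq
    linarith
  -- rewrite as vanishing of a vector
  set w : H := (1 / (N:ℝ)) • ((ContinuousLinearMap.adjoint P) r) + lam • f with hw
  have hw0 : w = 0 := by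
    have hinner : ∀ g : H, ⟪w, g⟫_ℝ = 0 := by
      intro g
      rw [hw, inner_add_left, real_inner_smul_left, real_inner_smul_left,
        ContinuousLinearMap.adjoint_inner_left]
      exact key g
    have := hinner w
    rwa [inner_self_eq_zero] at this
  -- A (f - fbar) = (1/(N t)) • P* b - lam • fbar
  have hAfb : A (f - fbar) = (1 / ((N:ℝ) * t)) • ((ContinuousLinearMap.adjoint P) b)
      - lam • fbar := by
    have expand : A (f - fbar)
        = ((1 / (N:ℝ)) • ((ContinuousLinearMap.adjoint P) (P f - y)) + lam • f)
          + (1 / (N:ℝ)) • ((ContinuousLinearMap.adjoint P) y)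
          - (1 / (N:ℝ)) • ((ContinuousLinearMap.adjoint P) (P fbar)) - lam • fbar := by
      simp only [hA, ContinuousLinearMap.add_apply, ContinuousLinearMap.smul_apply,
        ContinuousLinearMap.coe_comp', Function.comp_apply, ContinuousLinearMap.one_apply,
        map_sub, smul_sub]
      module
    rw [expand, ← hr, ← hw, hw0, hy, map_add, map_smul]
    rw [smul_add]
    have : (1 / (N:ℝ)) • (1 / t) • ((ContinuousLinearMap.adjoint P) b)
        = (1 / ((N:ℝ) * t)) • ((ContinuousLinearMap.adjoint P) b) := by
      rw [smul_smul]; ring_nf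
    rw [this]
    abel
  -- A is a unit
  have hAunit : IsUnit A := by
    set B : H →L[ℝ] H →L[ℝ] ℝ := (innerSL ℝ).comp A with hB
    have hBapp : ∀ v u : H, B v u = ⟪A v, u⟫_ℝ := fun v u => rfl
    have hcoer : IsCoercive B := by
      refine ⟨lam, hlam, fun u => ?_⟩
      rw [hBapp]
      have : ⟪A u, u⟫_ℝ = (1 / (N:ℝ)) * ⟪P u, P u⟫_ℝ + lam * ⟪u, u⟫_ℝ := by
        simp only [hA, ContinuousLinearMap.add_apply, ContinuousLinearMap.smul_apply,
          ContinuousLinearMap.coe_comp', Function.comp_apply, ContinuousLinearMap.one_apply,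
          inner_add_left, real_inner_smul_left, ContinuousLinearMap.adjoint_inner_left]
      rw [this, real_inner_self_eq_norm_mul_norm, real_inner_self_eq_norm_mul_norm]
      have hp : 0 ≤ (1 / (N:ℝ)) * (‖P u‖ * ‖P u‖) := by positivity
      nlinarith
    set E := hcoer.continuousLinearEquivOfBilin with hE
    have hEA : (E : H →L[ℝ] H) = A := by
      ext v
      have : A v = E v := hcoer.unique_continuousLinearEquivOfBilin (fun u => (hBapp v u).symm)
      exact this.symm
    refine ⟨⟨A, (E.symm : H →L[ℝ] H), ?_, ?_⟩, rfl⟩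
    · ext v
      simp only [ContinuousLinearMap.mul_apply, ← hEA]
      simp
    · ext v
      simp only [ContinuousLinearMap.mul_apply, ← hEA]
      simp
  -- invert
  have hfin : f - fbar = Ring.inverse A ((1 / ((N:ℝ) * t)) • ((ContinuousLinearMap.adjoint P) b))
      - Ring.inverse A (lam • fbar) := by
    have h1 : Ring.inverse A * A = 1 := Ring.inverse_mul_cancel A hAunit
    have h2 : (Ring.inverse A * A) (f - fbar) = f - fbar := by rw [h1]; rfl
    rw [ContinuousLinearMap.mul_apply, hAfb, map_sub] at h2
    exact h2.symm
  rw [hfin]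
  have tri : ‖Ring.inverse A ((1 / ((N:ℝ) * t)) • ((ContinuousLinearMap.adjoint P) b))
      - Ring.inverse A (lam • fbar)‖
      ≤ ‖Ring.inverse A (lam • fbar)‖
        + ‖Ring.inverse A ((1 / ((N:ℝ) * t)) • ((ContinuousLinearMap.adjoint P) b))‖ := by
    rw [sub_eq_neg_add]
    refine le_trans (norm_add_le _ _) ?_
    rw [norm_neg]
  refine tri.trans ?_
  refine add_le_add le_rfl ?_
  calc ‖Ring.inverse A ((1 / ((N:ℝ) * t)) • ((ContinuousLinearMap.adjoint P) b))‖
      = (1 / ((N:ℝ) * t)) * ‖((Ring.inverse A).comp (ContinuousLinearMap.adjoint P)) b‖ := by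
        rw [map_smul, norm_smul, Real.norm_eq_abs, abs_of_pos (by positivity)]; rfl
    _ ≤ 1 / ((N:ℝ) * t) * ‖(Ring.inverse A).comp (ContinuousLinearMap.adjoint P)‖ * ‖b‖ := by
        rw [mul_assoc]
        gcongr
        exact ((Ring.inverse A).comp (ContinuousLinearMap.adjoint P)).le_opNorm b
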